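/- Let Y ∈ ℝ^{c×n} have rank c with singular values μ₁ ≥ … ≥ μ_c and SVD Y = U_Y Σ_Y V_Yᵀ. Let d < c and let X ∈ ℝ^{d×n} have rank d with fixed singular values σ₁ ≥ … ≥ σ_d and fixed left singular vectors. Then the minimum over V_X ∈ St_d(ℝⁿ) of ‖[Y ; U_X Σ_X V_Xᵀ]‖₊ equals Σ_{i=1}^{d} √(μ_i² + σ_i²) + Σ_{i=d+1}^{c} μ_i, attained when V_X consists of the first d columns of V_Y. -/

import Mathlib

open Matrix

/-- The nuclear norm of a real matrix: the sum of its singular values. -/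
noncomputable def nuclearNorm {m n : Type*} [Fintype m] [Fintype n] [DecidableEq n]
    (A : Matrix m n ℝ) : ℝ :=
  ∑ i, Real.sqrt ((Matrix.isHermitian_conjTranspose_mul_self A).eigenvalues i)

section Aux
open Finset

lemma substoch_sum_le (c k : ℕ) (ρ w : ℕ → ℝ)
    (hρA : ∀ ⦃i j⦄, i ≤ j → j < c → ρ j ≤ ρ i)
    (hρ0 : ∀ i, i < c → 0 ≤ ρ i) (hw0 : ∀ i, 0 ≤ w i) (hw1 : ∀ i, w i ≤ 1)
    (hwk : ∑ i ∈ Finset.range c, w i ≤ (k : ℝ)) :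
    ∑ i ∈ Finset.range c, w i * ρ i ≤ ∑ i ∈ Finset.range (min k c), ρ i := by
  set m : ℝ := if h : k < c then ρ k else 0 with hm
  have hm0 : 0 ≤ m := by
    rw [hm]; split
    · exact hρ0 _ ‹_›
    · exact le_refl 0
  have key : ∀ i ∈ Finset.range c, w i * ρ i ≤ w i * m + (if i < k then ρ i - m else 0) := by
    intro i hi
    rw [Finset.mem_range] at hi
    by_cases hik : i < k
    · simp only [hik, if_true]
      have h1 : m ≤ ρ i := by
        rw [hm]; split
        · exact hρA (le_of_lt hik) ‹_›
        · exact hρ0 i hi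
      nlinarith [hw0 i, hw1 i]
    · simp only [hik, if_false]
      have hkc : k < c := lt_of_le_of_lt (not_lt.mp hik) hi
      have h1 : ρ i ≤ m := by rw [hm, dif_pos hkc]; exact hρA (not_lt.mp hik) hi
      nlinarith [hw0 i]
  calc ∑ i ∈ Finset.range c, w i * ρ i
      ≤ ∑ i ∈ Finset.range c, (w i * m + (if i < k then ρ i - m else 0)) :=
        Finset.sum_le_sum key
    _ = m * (∑ i ∈ Finset.range c, w i) + ∑ i ∈ Finset.range (min k c), (ρ i - m) := by
        rw [Finset.sum_add_distrib, Finset.mul_sum]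
        congr 1
        · exact Finset.sum_congr rfl fun i _ => mul_comm _ _
        · rw [← Finset.sum_filter]
          congr 1
          ext i
          simp [Finset.mem_filter, Finset.mem_range, lt_min_iff, and_comm]
    _ ≤ m * k + ∑ i ∈ Finset.range (min k c), (ρ i - m) := by
        gcongr
    _ ≤ ∑ i ∈ Finset.range (min k c), ρ i := by
        rw [Finset.sum_sub_distrib, Finset.sum_const, Finset.card_range, nsmul_eq_mul]
        have : m * k - m * min k c ≤ 0 := by
          rcases lt_or_ge k c with h | h
          · rw [min_eq_left (le_of_lt h)]; ring_nf; exact le_refl 0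
          · have : m = 0 := by rw [hm, dif_neg (not_lt.mpr h)]
            simp [this]
        have h2 : ((k ⊓ c : ℕ) : ℝ) * m = m * ((k ⊓ c : ℕ) : ℝ) := mul_comm _ _
        linarith

lemma hlp_sqrt (n : ℕ) (a b : ℕ → ℝ) (ha0 : ∀ i, 0 ≤ a i) (hb0 : ∀ i, 0 ≤ b i)
    (haA : ∀ ⦃i j⦄, i ≤ j → j < n → a j ≤ a i) (hbA : ∀ ⦃i j⦄, i ≤ j → j < n → b j ≤ b i)
    (hpart : ∀ k, k ≤ n → ∑ i ∈ Finset.range k, a i ≤ ∑ i ∈ Finset.range k, b i)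
    (htot : ∑ i ∈ Finset.range n, a i = ∑ i ∈ Finset.range n, b i) :
    ∑ i ∈ Finset.range n, Real.sqrt (b i) ≤ ∑ i ∈ Finset.range n, Real.sqrt (a i) := by
  set s : ℕ → ℝ := fun i => (Real.sqrt (a i) + Real.sqrt (b i))⁻¹ with hs
  set dd : ℕ → ℝ := fun i => b i - a i with hdd
  have hzero : ∀ i, Real.sqrt (a i) + Real.sqrt (b i) = 0 → a i = 0 ∧ b i = 0 := by
    intro i h
    have h1 : Real.sqrt (a i) = 0 := by
      nlinarith [Real.sqrt_nonneg (a i), Real.sqrt_nonneg (b i)]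
    have h2 : Real.sqrt (b i) = 0 := by
      nlinarith [Real.sqrt_nonneg (a i), Real.sqrt_nonneg (b i)]
    constructor
    · have := Real.sqrt_eq_zero'.mp h1
      exact le_antisymm this (ha0 i)
    · have := Real.sqrt_eq_zero'.mp h2
      exact le_antisymm this (hb0 i)
  have hsd : ∀ i, Real.sqrt (b i) - Real.sqrt (a i) = s i * dd i := by
    intro i
    by_cases h : Real.sqrt (a i) + Real.sqrt (b i) = 0
    · obtain ⟨h1, h2⟩ := hzero i h
      simp [hs, hdd, h1, h2, h]
    · have key : (Real.sqrt (b i) - Real.sqrt (a i)) * (Real.sqrt (a i) + Real.sqrt (b i))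
          = b i - a i := by
        have e1 := Real.sq_sqrt (ha0 i)
        have e2 := Real.sq_sqrt (hb0 i)
        ring_nf
        nlinarith [e1, e2]
      simp only [hs, hdd]
      rw [← key, mul_comm (Real.sqrt (b i) - Real.sqrt (a i)), ← mul_assoc, inv_mul_cancel₀ h,
        one_mul]
  have hD : ∀ k, k ≤ n → 0 ≤ ∑ j ∈ Finset.range k, dd j := by
    intro k hk
    have := hpart k hk
    simp only [hdd, Finset.sum_sub_distrib]
    linarith
  have hDn : ∑ j ∈ Finset.range n, dd j = 0 := by
    simp only [hdd, Finset.sum_sub_distrib]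
    linarith [htot]
  have main : ∑ i ∈ Finset.range n, (Real.sqrt (b i) - Real.sqrt (a i)) ≤ 0 := by
    have e1 : ∑ i ∈ Finset.range n, (Real.sqrt (b i) - Real.sqrt (a i))
        = ∑ i ∈ Finset.range n, s i • dd i := by
      refine Finset.sum_congr rfl fun i _ => ?_
      rw [smul_eq_mul]; exact hsd i
    rw [e1, Finset.sum_range_by_parts s dd n, hDn, smul_zero, zero_sub,
      neg_nonpos]
    apply Finset.sum_nonneg
    intro i hi
    rw [Finset.mem_range] at hi
    have hi1n : i + 1 < n := by omega
    rw [smul_eq_mul]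
    rcases (hD (i+1) (by omega)).lt_or_eq with hpos | hzeroD
    · -- D(i+1) > 0 : need s (i+1) ≥ s i
      have hwpos : 0 < Real.sqrt (a (i+1)) + Real.sqrt (b (i+1)) := by
        rcases (add_nonneg (Real.sqrt_nonneg _) (Real.sqrt_nonneg _) :
            (0:ℝ) ≤ Real.sqrt (a (i+1)) + Real.sqrt (b (i+1))).lt_or_eq with h | h
        · exact h
        · exfalso
          obtain ⟨h1, h2⟩ := hzero (i+1) h.symm
          have htail : ∑ j ∈ Finset.Ico (i+1) n, dd j = 0 := by
            apply Finset.sum_eq_zero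
            intro j hj
            rw [Finset.mem_Ico] at hj
            have haj : a j = 0 := le_antisymm (h1 ▸ haA hj.1 hj.2) (ha0 j)
            have hbj : b j = 0 := le_antisymm (h2 ▸ hbA hj.1 hj.2) (hb0 j)
            simp [hdd, haj, hbj]
          have hsplit : ∑ j ∈ Finset.range (i+1), dd j + ∑ j ∈ Finset.Ico (i+1) n, dd j
              = ∑ j ∈ Finset.range n, dd j := by
            simp only [Finset.range_eq_Ico]
            exact Finset.sum_Ico_consecutive _ (by omega) (by omega)
          rw [htail, add_zero, hDn] at hsplit
          linarith
      have hwle : Real.sqrt (a (i+1)) + Real.sqrt (b (i+1))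
          ≤ Real.sqrt (a i) + Real.sqrt (b i) := by
        have := Real.sqrt_le_sqrt (haA (Nat.le_succ i) hi1n)
        have := Real.sqrt_le_sqrt (hbA (Nat.le_succ i) hi1n)
        linarith
      have hsmono : s i ≤ s (i+1) := by
        simp only [hs]
        exact inv_anti₀ hwpos hwle
      have := hpos.le
      nlinarith
    · rw [← hzeroD]
      simp
  rw [Finset.sum_sub_distrib] at main
  linarith

open Matrix in
lemma diag_transpose_mul_self_nonneg {m n : ℕ} (A : Matrix (Fin m) (Fin n) ℝ) (i : Fin n) :
    0 ≤ (Aᵀ * A) i i := by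
  rw [Matrix.mul_apply]
  exact Finset.sum_nonneg fun k _ => by simp [Matrix.transpose_apply, mul_self_nonneg]

open Matrix in
lemma proj_diag_le {n k c : ℕ} (V : Matrix (Fin n) (Fin k) ℝ) (hV : Vᵀ * V = 1)
    (B : Matrix (Fin n) (Fin c) ℝ) (i : Fin c) :
    (Bᵀ * (V * Vᵀ) * B) i i ≤ (Bᵀ * B) i i := by
  set P : Matrix (Fin n) (Fin n) ℝ := 1 - V * Vᵀ with hP
  have hPsymm : Pᵀ = P := by
    rw [hP, Matrix.transpose_sub, Matrix.transpose_one, Matrix.transpose_mul,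
      Matrix.transpose_transpose]
  have hPidem : P * P = P := by
    rw [hP]
    have : V * Vᵀ * (V * Vᵀ) = V * Vᵀ := by
      calc V * Vᵀ * (V * Vᵀ) = V * (Vᵀ * V) * Vᵀ := by
            rw [Matrix.mul_assoc, Matrix.mul_assoc, Matrix.mul_assoc]
        _ = V * Vᵀ := by rw [hV, Matrix.mul_one]
    rw [Matrix.sub_mul, Matrix.mul_sub, Matrix.mul_sub, Matrix.one_mul, Matrix.mul_one, this]
    noncomm_ring
  have key : Bᵀ * P * B = (P * B)ᵀ * (P * B) := by
    rw [Matrix.transpose_mul, hPsymm]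
    calc Bᵀ * P * B = Bᵀ * (P * P) * B := by rw [hPidem]
      _ = Bᵀ * P * (P * B) := by rw [Matrix.mul_assoc, Matrix.mul_assoc, Matrix.mul_assoc]
  have h0 : 0 ≤ (Bᵀ * P * B) i i := key ▸ diag_transpose_mul_self_nonneg (P * B) i
  have hexp : Bᵀ * P * B = Bᵀ * B - Bᵀ * (V * Vᵀ) * B := by
    rw [hP, Matrix.mul_sub, Matrix.mul_one, Matrix.sub_mul]
  rw [hexp] at h0
  have := h0
  simp only [Matrix.sub_apply] at this
  linarith

open Matrix in
lemma kf_trace_bound {n c k : ℕ} (W : Matrix (Fin n) (Fin c) ℝ) (V : Matrix (Fin n) (Fin k) ℝ)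
    (hW : Wᵀ * W = 1) (hV : Vᵀ * V = 1) (ρ : ℕ → ℝ)
    (hρA : ∀ ⦃i j⦄, i ≤ j → j < c → ρ j ≤ ρ i) (hρ0 : ∀ i, i < c → 0 ≤ ρ i) :
    Matrix.trace (Vᵀ * (W * Matrix.diagonal (fun i : Fin c => ρ i.val) * Wᵀ) * V)
      ≤ ∑ i ∈ Finset.range (min k c), ρ i := by
  set D : Matrix (Fin c) (Fin c) ℝ := Matrix.diagonal (fun i : Fin c => ρ i.val) with hD
  set M : Matrix (Fin c) (Fin c) ℝ := (Wᵀ * V) * (Vᵀ * W) with hM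
  have h1 : Matrix.trace (Vᵀ * (W * D * Wᵀ) * V) = Matrix.trace (D * M) := by
    have e1 : Vᵀ * (W * D * Wᵀ) * V = (Vᵀ * W) * D * (Wᵀ * V) := by
      simp only [Matrix.mul_assoc]
    rw [e1, Matrix.trace_mul_cycle, Matrix.trace_mul_comm, hM, Matrix.mul_assoc]
  have hMt : M = (Vᵀ * W)ᵀ * (Vᵀ * W) := by
    rw [hM, Matrix.transpose_mul, Matrix.transpose_transpose]
  have hw0 : ∀ i : Fin c, 0 ≤ M i i := fun i =>
    hMt ▸ diag_transpose_mul_self_nonneg (Vᵀ * W) i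
  have hw1 : ∀ i : Fin c, M i i ≤ 1 := by
    intro i
    have h := proj_diag_le V hV W i
    rw [hW] at h
    have e : M i i = (Wᵀ * (V * Vᵀ) * W) i i := by
      rw [hM]; congr 1; simp only [Matrix.mul_assoc]
    rw [e]
    simpa using h
  have hsum : ∑ i : Fin c, M i i ≤ (k : ℝ) := by
    have e : ∑ i : Fin c, M i i = Matrix.trace ((Vᵀ * W) * (Wᵀ * V)) := by
      rw [hM, Matrix.trace_mul_comm]
      rfl
    rw [e]
    have hle : ∀ j : Fin k, ((Vᵀ * W) * (Wᵀ * V)) j j ≤ 1 := by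
      intro j
      have h := proj_diag_le W hW V j
      rw [hV] at h
      have e2 : ((Vᵀ * W) * (Wᵀ * V)) j j = (Vᵀ * (W * Wᵀ) * V) j j := by
        congr 1; simp only [Matrix.mul_assoc]
      rw [e2]
      simpa using h
    calc Matrix.trace ((Vᵀ * W) * (Wᵀ * V)) = ∑ j : Fin k, ((Vᵀ * W) * (Wᵀ * V)) j j := rfl
      _ ≤ ∑ _j : Fin k, (1 : ℝ) := Finset.sum_le_sum fun j _ => hle j
      _ = (k : ℝ) := by simp
  have h2 : Matrix.trace (D * M) = ∑ i : Fin c, ρ i.val * M i i := by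
    rw [hD]
    simp [Matrix.trace, Matrix.diag, Matrix.diagonal_mul]
  rw [h1, h2]
  set w : ℕ → ℝ := fun i => if h : i < c then M ⟨i, h⟩ ⟨i, h⟩ else 0 with hw
  have conv : ∑ i : Fin c, ρ i.val * M i i = ∑ i ∈ Finset.range c, w i * ρ i := by
    rw [← Fin.sum_univ_eq_sum_range (fun i => w i * ρ i) c]
    refine Finset.sum_congr rfl fun i _ => ?_
    rw [hw]
    simp only [i.isLt, dif_pos]
    rw [mul_comm]
  rw [conv]
  apply substoch_sum_le c k ρ w hρA hρ0
  · intro i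
    rw [hw]
    dsimp only
    split
    · exact hw0 _
    · exact le_refl 0
  · intro i
    rw [hw]
    dsimp only
    split
    · exact hw1 _
    · exact zero_le_one
  · rw [← Fin.sum_univ_eq_sum_range (fun i => w i) c]
    calc ∑ i : Fin c, w i.val = ∑ i : Fin c, M i i := by
          refine Finset.sum_congr rfl fun i _ => ?_
          rw [hw]; simp only [i.isLt, dif_pos]
      _ ≤ (k : ℝ) := hsum

open Matrix in
lemma psd_WDW {n c : ℕ} (W : Matrix (Fin n) (Fin c) ℝ) (ρ : Fin c → ℝ) (hρ : ∀ i, 0 ≤ ρ i) :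
    (W * Matrix.diagonal ρ * Wᵀ).PosSemidef := by
  set B : Matrix (Fin n) (Fin c) ℝ := W * Matrix.diagonal (fun i => Real.sqrt (ρ i)) with hB
  have key : W * Matrix.diagonal ρ * Wᵀ = B * Bᴴ := by
    rw [hB, Matrix.conjTranspose_eq_transpose_of_trivial, Matrix.transpose_mul,
      Matrix.diagonal_transpose]
    have e2 : (W * Matrix.diagonal fun i => Real.sqrt (ρ i))
          * ((Matrix.diagonal fun i => Real.sqrt (ρ i)) * Wᵀ)
        = W * ((Matrix.diagonal fun i => Real.sqrt (ρ i))
          * Matrix.diagonal fun i => Real.sqrt (ρ i)) * Wᵀ := by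
      simp only [Matrix.mul_assoc]
    rw [e2, Matrix.diagonal_mul_diagonal]
    have e3 : (fun i => Real.sqrt (ρ i) * Real.sqrt (ρ i)) = ρ :=
      funext fun i => Real.mul_self_sqrt (hρ i)
    rw [e3]
  rw [key]
  exact Matrix.posSemidef_self_mul_conjTranspose B

open Matrix in
lemma trace_WDW {n c : ℕ} (W : Matrix (Fin n) (Fin c) ℝ) (hW : Wᵀ * W = 1) (ρ : Fin c → ℝ) :
    Matrix.trace (W * Matrix.diagonal ρ * Wᵀ) = ∑ i, ρ i := by
  rw [Matrix.trace_mul_cycle, hW, Matrix.one_mul, Matrix.trace_diagonal]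

open Matrix in
lemma conj_submatrix {n k : ℕ} (U C : Matrix (Fin n) (Fin n) ℝ) (p : Fin k → Fin n) :
    (U.submatrix id p)ᵀ * C * (U.submatrix id p) = (Uᵀ * C * U).submatrix p p := by
  ext i j
  simp only [Matrix.mul_apply, Matrix.submatrix_apply, Matrix.transpose_apply, id_eq,
    Finset.sum_mul, Finset.mul_sum]

lemma sum_fin_castLE {c d : ℕ} (h : d ≤ c) (F : Fin c → ℝ)
    (hF : ∀ q : Fin c, d ≤ q.val → F q = 0) :
    ∑ q : Fin c, F q = ∑ p : Fin d, F (Fin.castLE h p) := by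
  have e : ∑ p : Fin d, F (Fin.castLE h p) = ∑ x ∈ Finset.univ.image (Fin.castLE h), F x :=
    (Finset.sum_image (fun x _ y _ hxy => Fin.castLE_injective h hxy)).symm
  rw [e]
  apply (Finset.sum_subset (Finset.subset_univ _) _).symm
  intro x _ hx
  apply hF
  by_contra hlt
  push_neg at hlt
  exact hx (Finset.mem_image.mpr ⟨⟨x.val, hlt⟩, Finset.mem_univ _, Fin.ext rfl⟩)

lemma sum_range_min {c : ℕ} (α : ℕ → ℝ) (hz : ∀ i, c ≤ i → α i = 0) (k : ℕ) :
    ∑ i ∈ Finset.range k, α i = ∑ i ∈ Finset.range (min k c), α i := by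
  rcases le_or_gt k c with h | h
  · rw [min_eq_left h]
  · rw [min_eq_right h.le]
    apply (Finset.sum_subset (Finset.range_subset_range.mpr h.le) _).symm
    intro x hx hnx
    exact hz x (by simp only [Finset.mem_range] at hx hnx ⊢; omega)

open Matrix in
open scoped MatrixOrder in
lemma sum_sqrt_eig_eq {n c : ℕ} (C : Matrix (Fin n) (Fin n) ℝ) (hC : C.IsHermitian)
    (W : Matrix (Fin n) (Fin c) ℝ) (hW : Wᵀ * W = 1) (τ : Fin c → ℝ) (hτ0 : ∀ i, 0 ≤ τ i)
    (hCW : C = W * Matrix.diagonal τ * Wᵀ) :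
    ∑ i : Fin n, Real.sqrt (hC.eigenvalues i) = ∑ i : Fin c, Real.sqrt (τ i) := by
  have hPSD : C.PosSemidef := hCW ▸ psd_WDW W τ hτ0
  set R : Matrix (Fin n) (Fin n) ℝ := W * Matrix.diagonal (fun i => Real.sqrt (τ i)) * Wᵀ with hR
  have hRpsd : R.PosSemidef := psd_WDW W _ (fun i => Real.sqrt_nonneg _)
  have hR2 : R ^ 2 = C := by
    rw [pow_two, hR, hCW]
    have e1 : W * Matrix.diagonal (fun i => Real.sqrt (τ i)) * Wᵀ
          * (W * Matrix.diagonal (fun i => Real.sqrt (τ i)) * Wᵀ)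
        = W * (Matrix.diagonal (fun i => Real.sqrt (τ i)) * ((Wᵀ * W)
          * (Matrix.diagonal (fun i => Real.sqrt (τ i)) * Wᵀ))) := by
      simp only [Matrix.mul_assoc]
    rw [e1, hW, Matrix.one_mul]
    have e4 : W * ((Matrix.diagonal fun i => Real.sqrt (τ i))
          * ((Matrix.diagonal fun i => Real.sqrt (τ i)) * Wᵀ))
        = W * ((Matrix.diagonal fun i => Real.sqrt (τ i))
          * (Matrix.diagonal fun i => Real.sqrt (τ i))) * Wᵀ := by
      simp only [Matrix.mul_assoc]
    rw [e4, Matrix.diagonal_mul_diagonal]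
    have e3 : (fun i => Real.sqrt (τ i) * Real.sqrt (τ i)) = τ :=
      funext fun i => Real.mul_self_sqrt (hτ0 i)
    rw [e3]
  have hsqrt : R = CFC.sqrt C := by
    exact (CFC.sqrt_unique ((pow_two R).symm.trans hR2)
      (Matrix.nonneg_iff_posSemidef.mpr hRpsd)).symm
  have h1 : Matrix.trace R = ∑ i : Fin c, Real.sqrt (τ i) := trace_WDW W hW _
  have h2 : Matrix.trace (CFC.sqrt C) = ∑ i : Fin n, Real.sqrt (hC.eigenvalues i) := by
    rw [CFC.sqrt_eq_real_sqrt C (Matrix.nonneg_iff_posSemidef.mpr hPSD), cfcₙ_eq_cfc,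
      hC.cfc_eq, Matrix.IsHermitian.cfc, Unitary.conjStarAlgAut_apply, Matrix.trace_mul_cycle,
      Unitary.coe_star_mul_self, Matrix.one_mul, Matrix.trace_diagonal]
    simp
  rw [← hsqrt] at h2
  rw [← h1, ← h2]

open Matrix in
lemma submatrix_orthonormal {n k : ℕ} (U : Matrix (Fin n) (Fin n) ℝ) (hU : Uᵀ * U = 1)
    (p : Fin k → Fin n) (hp : Function.Injective p) :
    (U.submatrix id p)ᵀ * (U.submatrix id p) = 1 := by
  ext i j
  have e1 : ((U.submatrix id p)ᵀ * (U.submatrix id p)) i j = (Uᵀ * U) (p i) (p j) := by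
    simp [Matrix.mul_apply, Matrix.submatrix_apply, Matrix.transpose_apply]
  rw [e1, hU]
  by_cases hij : i = j
  · simp [hij, Matrix.one_apply]
  · have hne : p i ≠ p j := fun h => hij (hp h)
    simp [Matrix.one_apply, hij, hne]

open Matrix in
lemma sum_sqrt_eig_lower {n c d : ℕ} (hdc : d ≤ c) (hcn : c ≤ n)
    (C : Matrix (Fin n) (Fin n) ℝ) (hC : C.IsHermitian)
    (W1 : Matrix (Fin n) (Fin c) ℝ) (W2 : Matrix (Fin n) (Fin d) ℝ)
    (hW1 : W1ᵀ * W1 = 1) (hW2 : W2ᵀ * W2 = 1)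
    (α β : ℕ → ℝ)
    (hα0 : ∀ i, 0 ≤ α i) (hβ0 : ∀ i, 0 ≤ β i)
    (hαA : ∀ ⦃i j⦄, i ≤ j → α j ≤ α i) (hβA : ∀ ⦃i j⦄, i ≤ j → β j ≤ β i)
    (hαz : ∀ i, c ≤ i → α i = 0) (hβz : ∀ i, d ≤ i → β i = 0)
    (hCST : C = W1 * Matrix.diagonal (fun i : Fin c => α i.val) * W1ᵀ
      + W2 * Matrix.diagonal (fun i : Fin d => β i.val) * W2ᵀ) :
    ∑ i ∈ Finset.range n, Real.sqrt (α i + β i)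
      ≤ ∑ i : Fin n, Real.sqrt (hC.eigenvalues i) := by
  have hPSD : C.PosSemidef := by
    rw [hCST]
    exact (psd_WDW W1 _ fun i => hα0 _).add (psd_WDW W2 _ fun i => hβ0 _)
  set lam : Fin n → ℝ := hC.eigenvalues with hlam
  have hlam0 : ∀ i, 0 ≤ lam i := fun i => hPSD.eigenvalues_nonneg i
  set e : Equiv.Perm (Fin n) := Tuple.sort lam with he
  have hmono : Monotone (lam ∘ e) := Tuple.monotone_sort lam
  set ℓ : ℕ → ℝ := fun j => if h : j < n then lam (e (Fin.rev ⟨j, h⟩)) else 0 with hℓ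
  have hℓ0 : ∀ i, 0 ≤ ℓ i := by
    intro i; rw [hℓ]; dsimp only; split
    · exact hlam0 _
    · exact le_refl 0
  have hℓA : ∀ ⦃i j⦄, i ≤ j → ℓ j ≤ ℓ i := by
    intro i j hij
    rw [hℓ]; dsimp only
    by_cases hj : j < n
    · have hi : i < n := lt_of_le_of_lt hij hj
      rw [dif_pos hj, dif_pos hi]
      have : (Fin.rev ⟨j, hj⟩ : Fin n) ≤ Fin.rev ⟨i, hi⟩ := by
        simp only [Fin.le_def, Fin.val_rev]
        omega
      exact hmono this
    · rw [dif_neg hj]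
      split
      · exact hlam0 _
      · exact le_refl 0
  set U : Matrix (Fin n) (Fin n) ℝ := (hC.eigenvectorUnitary : Matrix (Fin n) (Fin n) ℝ)
    with hUdef
  have hstar : (star (hC.eigenvectorUnitary : Matrix (Fin n) (Fin n) ℝ)
      : Matrix (Fin n) (Fin n) ℝ) = Uᵀ := by
    rw [Matrix.star_eq_conjTranspose, Matrix.conjTranspose_eq_transpose_of_trivial, hUdef]
  have hU1 : Uᵀ * U = 1 := by
    rw [← hstar]
    exact_mod_cast Unitary.coe_star_mul_self hC.eigenvectorUnitary
  have hU2 : U * Uᵀ = 1 := by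
    rw [← hstar]
    exact_mod_cast Unitary.coe_mul_star_self hC.eigenvectorUnitary
  have hdiagU : Uᵀ * C * U = Matrix.diagonal lam := by
    have h := hC.conjStarAlgAut_star_eigenvectorUnitary
    rw [Unitary.conjStarAlgAut_star_apply] at h
    rw [hstar] at h
    rw [h]
    congr 1
  -- partial sums
  have hpart : ∀ k, k ≤ n → ∑ i ∈ Finset.range k, ℓ i
      ≤ ∑ i ∈ Finset.range k, (α i + β i) := by
    intro k hkn
    set p : Fin k → Fin n := fun j => e (Fin.rev (⟨j.val, lt_of_lt_of_le j.isLt hkn⟩ : Fin n))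
      with hp
    have hpinj : Function.Injective p := by
      intro a b hab
      rw [hp] at hab
      have h1 := Fin.rev_injective (e.injective hab)
      have h2 : a.val = b.val := congrArg (Fin.val : Fin n → ℕ) h1
      exact Fin.ext h2

    set V : Matrix (Fin n) (Fin k) ℝ := U.submatrix id p with hV
    have hVV : Vᵀ * V = 1 := submatrix_orthonormal U hU1 p hpinj
    have htr : Matrix.trace (Vᵀ * C * V) = ∑ i ∈ Finset.range k, ℓ i := by
      rw [hV, conj_submatrix, hdiagU, ← Fin.sum_univ_eq_sum_range (fun i => ℓ i) k]
      rw [Matrix.trace]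
      refine Finset.sum_congr rfl fun j _ => ?_
      rw [Matrix.diag_apply, Matrix.submatrix_apply, Matrix.diagonal_apply_eq, hℓ]
      dsimp only
      rw [dif_pos (lt_of_lt_of_le j.isLt hkn)]
    have hsplit : Matrix.trace (Vᵀ * C * V)
        = Matrix.trace (Vᵀ * (W1 * Matrix.diagonal (fun i : Fin c => α i.val) * W1ᵀ) * V)
          + Matrix.trace (Vᵀ * (W2 * Matrix.diagonal (fun i : Fin d => β i.val) * W2ᵀ) * V) := by
      rw [hCST, Matrix.mul_add, Matrix.add_mul, Matrix.trace_add]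
    have b1 := kf_trace_bound W1 V hW1 hVV α (fun i j hij hj => hαA hij) (fun i _ => hα0 i)
    have b2 := kf_trace_bound W2 V hW2 hVV β (fun i j hij hj => hβA hij) (fun i _ => hβ0 i)
    rw [← sum_range_min α hαz k] at b1
    rw [← sum_range_min β hβz k] at b2
    rw [← htr, hsplit, Finset.sum_add_distrib]
    exact add_le_add b1 b2
  -- total sums
  have hℓsum : ∑ i ∈ Finset.range n, ℓ i = ∑ i : Fin n, lam i := by
    rw [← Fin.sum_univ_eq_sum_range (fun i => ℓ i) n]
    have : ∀ j : Fin n, ℓ j.val = lam ((Fin.revPerm.trans e) j) := by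
      intro j
      rw [hℓ]; dsimp only
      rw [dif_pos j.isLt]
      rfl
    rw [Finset.sum_congr rfl fun j _ => this j]
    exact Equiv.sum_comp (Fin.revPerm.trans e) lam
  have htraceC : ∑ i : Fin n, lam i = Matrix.trace C := by
    have h1 : Matrix.trace (Matrix.diagonal lam) = ∑ i : Fin n, lam i := Matrix.trace_diagonal lam
    rw [← h1, ← hdiagU, Matrix.trace_mul_cycle, hU2, Matrix.one_mul]
  have htot : ∑ i ∈ Finset.range n, ℓ i = ∑ i ∈ Finset.range n, (α i + β i) := by
    rw [hℓsum, htraceC, hCST, Matrix.trace_add, trace_WDW W1 hW1, trace_WDW W2 hW2,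
      Finset.sum_add_distrib]
    congr 1
    · rw [Fin.sum_univ_eq_sum_range (fun i => α i) c, sum_range_min α hαz n,
        min_eq_right hcn]
    · rw [Fin.sum_univ_eq_sum_range (fun i => β i) d, sum_range_min β hβz n,
        min_eq_right (le_trans hdc hcn)]
  have hfinal := hlp_sqrt n ℓ (fun i => α i + β i) hℓ0
    (fun i => add_nonneg (hα0 i) (hβ0 i))
    (fun i j hij _ => hℓA hij)
    (fun i j hij _ => add_le_add (hαA hij) (hβA hij))
    hpart htot
  have hconv : ∑ i ∈ Finset.range n, Real.sqrt (ℓ i)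
      = ∑ i : Fin n, Real.sqrt (lam i) := by
    rw [← Fin.sum_univ_eq_sum_range (fun i => Real.sqrt (ℓ i)) n]
    have : ∀ j : Fin n, Real.sqrt (ℓ j.val) = Real.sqrt (lam ((Fin.revPerm.trans e) j)) := by
      intro j
      rw [hℓ]; dsimp only
      rw [dif_pos j.isLt]
      rfl
    rw [Finset.sum_congr rfl fun j _ => this j]
    exact Equiv.sum_comp (Fin.revPerm.trans e) (fun i => Real.sqrt (lam i))
  calc ∑ i ∈ Finset.range n, Real.sqrt (α i + β i)
      ≤ ∑ i ∈ Finset.range n, Real.sqrt (ℓ i) := hfinal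
    _ = ∑ i : Fin n, Real.sqrt (lam i) := hconv

open Matrix in
lemma WDWt_apply {n c : ℕ} (A : Matrix (Fin n) (Fin c) ℝ) (v : Fin c → ℝ) (i j : Fin n) :
    (A * Matrix.diagonal v * Aᵀ) i j = ∑ p, A i p * v p * A j p := by
  rw [Matrix.mul_apply]
  refine Finset.sum_congr rfl fun p _ => ?_
  rw [Matrix.mul_diagonal, Matrix.transpose_apply]

open Matrix in
lemma submatrix_WDW {n c d : ℕ} (h : d ≤ c) (A : Matrix (Fin n) (Fin c) ℝ) (s : Fin d → ℝ) :
    (A.submatrix id (Fin.castLE h)) * Matrix.diagonal s * (A.submatrix id (Fin.castLE h))ᵀ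
      = A * Matrix.diagonal (fun q : Fin c => if hq : q.val < d then s ⟨q.val, hq⟩ else 0)
        * Aᵀ := by
  ext i j
  rw [WDWt_apply, WDWt_apply]
  rw [sum_fin_castLE h
    (fun q => A i q * (if hq : q.val < d then s ⟨q.val, hq⟩ else 0) * A j q)
    (fun q hq => by simp only [dif_neg (not_lt.mpr hq)]; ring)]
  refine Finset.sum_congr rfl fun p _ => ?_
  have hp : ((Fin.castLE h p : Fin c).val < d) := p.isLt
  simp only [Matrix.submatrix_apply, id_eq, dif_pos hp]
  rfl

lemma target_sum_eq {c d : ℕ} (hdc : d ≤ c) (μ : Fin c → ℝ) (σ : Fin d → ℝ)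
    (hμpos : ∀ i, 0 < μ i) :
    ∑ q : Fin c, Real.sqrt (μ q ^ 2 + (if h : q.val < d then σ ⟨q.val, h⟩ ^ 2 else 0))
      = (∑ i : Fin d, Real.sqrt (μ (Fin.castLE hdc i) ^ 2 + σ i ^ 2))
        + ∑ i : Fin c, (if d ≤ (i : ℕ) then μ i else 0) := by
  have key : ∀ q : Fin c,
      Real.sqrt (μ q ^ 2 + (if h : q.val < d then σ ⟨q.val, h⟩ ^ 2 else 0))
        = (if h : q.val < d then Real.sqrt (μ q ^ 2 + σ ⟨q.val, h⟩ ^ 2) else 0)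
          + (if d ≤ (q : ℕ) then μ q else 0) := by
    intro q
    by_cases h : q.val < d
    · rw [dif_pos h, dif_pos h, if_neg (by omega), add_zero]
    · rw [dif_neg h, dif_neg h, if_pos (not_lt.mp h), add_zero, zero_add,
        Real.sqrt_sq (hμpos q).le]
  rw [Finset.sum_congr rfl fun q _ => key q, Finset.sum_add_distrib]
  congr 1
  rw [sum_fin_castLE hdc
    (fun q => if h : q.val < d then Real.sqrt (μ q ^ 2 + σ ⟨q.val, h⟩ ^ 2) else 0)
    (fun q hq => dif_neg (not_lt.mpr hq))]
  refine Finset.sum_congr rfl fun p _ => ?_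
  have hp : ((Fin.castLE hdc p : Fin c).val < d) := p.isLt
  rw [dif_pos hp]
  rfl

open Matrix in
lemma svd_gram {a m : ℕ} (Uu : Matrix (Fin a) (Fin a) ℝ) (s : Fin a → ℝ)
    (V : Matrix (Fin m) (Fin a) ℝ) (hU : Uuᵀ * Uu = 1) :
    (Uu * Matrix.diagonal s * Vᵀ)ᵀ * (Uu * Matrix.diagonal s * Vᵀ)
      = V * Matrix.diagonal (fun i => s i ^ 2) * Vᵀ := by
  have e1 : (Uu * Matrix.diagonal s * Vᵀ)ᵀ * (Uu * Matrix.diagonal s * Vᵀ)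
      = V * (Matrix.diagonal s * ((Uuᵀ * Uu) * (Matrix.diagonal s * Vᵀ))) := by
    rw [Matrix.transpose_mul, Matrix.transpose_mul, Matrix.transpose_transpose,
      Matrix.diagonal_transpose]
    simp only [Matrix.mul_assoc]
  rw [e1, hU, Matrix.one_mul]
  have e2 : V * (Matrix.diagonal s * (Matrix.diagonal s * Vᵀ))
      = V * (Matrix.diagonal s * Matrix.diagonal s) * Vᵀ := by
    simp only [Matrix.mul_assoc]
  rw [e2, Matrix.diagonal_mul_diagonal]
  have e3 : (fun i => s i * s i) = fun i => s i ^ 2 := funext fun i => (pow_two (s i)).symm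
  rw [e3]

end Aux

/-- For rank-`c` `Y = U_Y Σ_Y V_Yᵀ` with singular values
`μ₁ ≥ … ≥ μ_c > 0` and `d < c`, and `X` of rank `d` with fixed singular values
`σ₁ ≥ … ≥ σ_d > 0` and fixed left singular vectors `U_X`, the minimum over
`V_X ∈ St_d(ℝⁿ)` of `‖[Y ; U_X Σ_X V_Xᵀ]‖₊` equals
`∑_{i=1}^{d} √(μ_i² + σ_i²) + ∑_{i=d+1}^{c} μ_i`, attained when `V_X`
consists of the first `d` columns of `V_Y`. -/
theorem nuclearNorm_stack_min_over_stiefel_low_dim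
    {c d n : ℕ} (hdc : d < c) (Y : Matrix (Fin c) (Fin n) ℝ)
    (UY : Matrix (Fin c) (Fin c) ℝ) (μ : Fin c → ℝ) (VY : Matrix (Fin n) (Fin c) ℝ)
    (hUY : UYᵀ * UY = 1) (hVY : VYᵀ * VY = 1)
    (hμanti : Antitone μ) (hμpos : ∀ i, 0 < μ i)
    (hSVD : Y = UY * Matrix.diagonal μ * VYᵀ)
    (UX : Matrix (Fin d) (Fin d) ℝ) (σ : Fin d → ℝ)
    (hUX : UXᵀ * UX = 1)
    (hσanti : Antitone σ) (hσpos : ∀ i, 0 < σ i) :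
    (∀ VX : Matrix (Fin n) (Fin d) ℝ, VXᵀ * VX = 1 →
        ((∑ i : Fin d, Real.sqrt (μ (Fin.castLE hdc.le i) ^ 2 + σ i ^ 2)) +
            ∑ i : Fin c, (if d ≤ (i : ℕ) then μ i else 0)) ≤
          nuclearNorm (fromRows Y (UX * Matrix.diagonal σ * VXᵀ))) ∧
      nuclearNorm (fromRows Y
          (UX * Matrix.diagonal σ * (VY.submatrix id (Fin.castLE hdc.le))ᵀ)) =
        (∑ i : Fin d, Real.sqrt (μ (Fin.castLE hdc.le i) ^ 2 + σ i ^ 2)) +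
          ∑ i : Fin c, (if d ≤ (i : ℕ) then μ i else 0) := by
  have hcn : c ≤ n := by
    have h1 : ((1 : Matrix (Fin c) (Fin c) ℝ)).rank = c := by
      rw [Matrix.rank_one, Fintype.card_fin]
    have h2 : (VYᵀ * VY).rank ≤ VY.rank := Matrix.rank_mul_le_right _ _
    have h3 : VY.rank ≤ n := by
      have := Matrix.rank_le_card_height VY
      simpa using this
    rw [hVY, h1] at h2
    omega
  set α : ℕ → ℝ := fun i => if h : i < c then μ ⟨i, h⟩ ^ 2 else 0 with hα
  set β : ℕ → ℝ := fun i => if h : i < d then σ ⟨i, h⟩ ^ 2 else 0 with hβ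
  have hα0 : ∀ i, 0 ≤ α i := by
    intro i; rw [hα]; dsimp only; split
    exacts [sq_nonneg _, le_refl 0]
  have hβ0 : ∀ i, 0 ≤ β i := by
    intro i; rw [hβ]; dsimp only; split
    exacts [sq_nonneg _, le_refl 0]
  have hαA : ∀ ⦃i j : ℕ⦄, i ≤ j → α j ≤ α i := by
    intro i j hij; rw [hα]; dsimp only
    by_cases hj : j < c
    · have hi : i < c := lt_of_le_of_lt hij hj
      rw [dif_pos hj, dif_pos hi]
      have hle : μ ⟨j, hj⟩ ≤ μ ⟨i, hi⟩ := hμanti hij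
      exact pow_le_pow_left₀ (hμpos _).le hle 2
    · rw [dif_neg hj]; split
      exacts [sq_nonneg _, le_refl 0]
  have hβA : ∀ ⦃i j : ℕ⦄, i ≤ j → β j ≤ β i := by
    intro i j hij; rw [hβ]; dsimp only
    by_cases hj : j < d
    · have hi : i < d := lt_of_le_of_lt hij hj
      rw [dif_pos hj, dif_pos hi]
      have hle : σ ⟨j, hj⟩ ≤ σ ⟨i, hi⟩ := hσanti hij
      exact pow_le_pow_left₀ (hσpos _).le hle 2
    · rw [dif_neg hj]; split
      exacts [sq_nonneg _, le_refl 0]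
  have hαz : ∀ i, c ≤ i → α i = 0 := fun i hi => by
    rw [hα]; dsimp only; rw [dif_neg (not_lt.mpr hi)]
  have hβz : ∀ i, d ≤ i → β i = 0 := fun i hi => by
    rw [hβ]; dsimp only; rw [dif_neg (not_lt.mpr hi)]
  have hαdiag : (fun i : Fin c => α i.val) = fun i : Fin c => μ i ^ 2 := by
    funext i; rw [hα]; dsimp only; rw [dif_pos i.isLt]
  have hβdiag : (fun i : Fin d => β i.val) = fun i : Fin d => σ i ^ 2 := by
    funext i; rw [hβ]; dsimp only; rw [dif_pos i.isLt]
  have hYY : Yᵀ * Y = VY * Matrix.diagonal (fun i : Fin c => μ i ^ 2) * VYᵀ := by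
    rw [hSVD]; exact svd_gram UY μ VY hUY
  have hzsum : ∀ i, c ≤ i → Real.sqrt (α i + β i) = 0 := fun i hi => by
    rw [hαz i hi, hβz i (le_trans hdc.le hi), add_zero, Real.sqrt_zero]
  have hsum_eq : ∑ i ∈ Finset.range n, Real.sqrt (α i + β i)
      = (∑ i : Fin d, Real.sqrt (μ (Fin.castLE hdc.le i) ^ 2 + σ i ^ 2)) +
          ∑ i : Fin c, (if d ≤ (i : ℕ) then μ i else 0) := by
    rw [sum_range_min (fun i => Real.sqrt (α i + β i)) hzsum n, min_eq_right hcn,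
      ← Fin.sum_univ_eq_sum_range (fun i => Real.sqrt (α i + β i)) c]
    rw [← target_sum_eq hdc.le μ σ hμpos]
    refine Finset.sum_congr rfl fun q _ => ?_
    rw [hα, hβ]; dsimp only
    rw [dif_pos q.isLt]
  constructor
  · intro VX hVX
    have hMM : (fromRows Y (UX * Matrix.diagonal σ * VXᵀ))ᵀ
          * (fromRows Y (UX * Matrix.diagonal σ * VXᵀ))
        = VY * Matrix.diagonal (fun i : Fin c => α i.val) * VYᵀ
          + VX * Matrix.diagonal (fun i : Fin d => β i.val) * VXᵀ := by
      rw [Matrix.transpose_fromRows, Matrix.fromCols_mul_fromRows, hYY,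
        svd_gram UX σ VX hUX, hαdiag, hβdiag]
    have lower := sum_sqrt_eig_lower hdc.le hcn _
      (Matrix.isHermitian_conjTranspose_mul_self (fromRows Y (UX * Matrix.diagonal σ * VXᵀ)))
      VY VX hVY hVX α β hα0 hβ0 hαA hβA hαz hβz hMM
    rw [hsum_eq] at lower
    exact lower
  · set VX0 : Matrix (Fin n) (Fin d) ℝ := VY.submatrix id (Fin.castLE hdc.le) with hVX0
    set τ : Fin c → ℝ :=
      fun q => μ q ^ 2 + (if h : q.val < d then σ ⟨q.val, h⟩ ^ 2 else 0) with hτ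
    have hτ0 : ∀ q, 0 ≤ τ q := by
      intro q; rw [hτ]; dsimp only
      have : (0:ℝ) ≤ (if h : q.val < d then σ ⟨q.val, h⟩ ^ 2 else 0) := by
        split
        exacts [sq_nonneg _, le_refl 0]
      nlinarith [sq_nonneg (μ q)]
    have hMM0 : (fromRows Y (UX * Matrix.diagonal σ * VX0ᵀ))ᵀ
          * (fromRows Y (UX * Matrix.diagonal σ * VX0ᵀ))
        = VY * Matrix.diagonal τ * VYᵀ := by
      rw [Matrix.transpose_fromRows, Matrix.fromCols_mul_fromRows, hYY,
        svd_gram UX σ VX0 hUX, hVX0, submatrix_WDW hdc.le VY (fun p => σ p ^ 2)]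
      calc VY * Matrix.diagonal (fun i : Fin c => μ i ^ 2) * VYᵀ
            + VY * Matrix.diagonal
              (fun q : Fin c => if hq : q.val < d then σ ⟨q.val, hq⟩ ^ 2 else 0) * VYᵀ
          = (VY * Matrix.diagonal (fun i : Fin c => μ i ^ 2)
            + VY * Matrix.diagonal
              (fun q : Fin c => if hq : q.val < d then σ ⟨q.val, hq⟩ ^ 2 else 0)) * VYᵀ :=
            (Matrix.add_mul _ _ _).symm
        _ = VY * (Matrix.diagonal (fun i : Fin c => μ i ^ 2)
            + Matrix.diagonal
              (fun q : Fin c => if hq : q.val < d then σ ⟨q.val, hq⟩ ^ 2 else 0)) * VYᵀ := by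
            rw [← Matrix.mul_add]
        _ = VY * Matrix.diagonal τ * VYᵀ := by
            rw [Matrix.diagonal_add]
    have heq := sum_sqrt_eig_eq _
      (Matrix.isHermitian_conjTranspose_mul_self (fromRows Y (UX * Matrix.diagonal σ * VX0ᵀ)))
      VY hVY τ hτ0 hMM0
    calc nuclearNorm (fromRows Y (UX * Matrix.diagonal σ * VX0ᵀ))
        = ∑ q : Fin c, Real.sqrt (τ q) := heq
      _ = (∑ i : Fin d, Real.sqrt (μ (Fin.castLE hdc.le i) ^ 2 + σ i ^ 2)) +
          ∑ i : Fin c, (if d ≤ (i : ℕ) then μ i else 0) := by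
          rw [hτ]
          exact target_sum_eq hdc.le μ σ hμpos
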